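/- (Relative smoothness of the Shmyrev objective) With notation as above, φ(b) ≤ ℓ(b; b') + D_h(b, b') for all positive bid matrices b, b' with equal row sums, where D_h(b,b') = Σ_{i,j} b_{ij} log(b_{ij}/b'_{ij}). -/

import Mathlib

open Finset Real

/-- The Shmyrev objective: `φ(b) = −Σ_{i,j} b_{ij} log v_{ij} + Σ_j p_j log p_j`
with `p_j = Σ_i b_{ij}`. -/
noncomputable def shmyrev (N M : ℕ) (v b : Fin N → Fin M → ℝ) : ℝ :=
  -∑ i, ∑ j, b i j * Real.log (v i j) + ∑ j, (∑ i, b i j) * Real.log (∑ i, b i j)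

/-- Log-sum inequality for positive families. -/
lemma log_sum_ineq (N : ℕ) (hN : 0 < N) (f g : Fin N → ℝ)
    (hf : ∀ i, 0 < f i) (hg : ∀ i, 0 < g i) :
    (∑ i, f i) * Real.log ((∑ i, f i) / (∑ i, g i)) ≤ ∑ i, f i * Real.log (f i / g i) := by
  have : Nonempty (Fin N) := ⟨⟨0, hN⟩⟩
  set A := ∑ i, f i with hA
  set B := ∑ i, g i with hB
  have hApos : 0 < A := Finset.sum_pos (fun i _ => hf i) univ_nonempty
  have hBpos : 0 < B := Finset.sum_pos (fun i _ => hg i) univ_nonempty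
  have key : ∀ i, f i * Real.log (A / B) ≤ f i * Real.log (f i / g i) - f i + g i * (A / B) := by
    intro i
    have hfb : 0 < f i * B := mul_pos (hf i) hBpos
    have hga : 0 < g i * A := mul_pos (hg i) hApos
    have hx : 0 < (f i * B) / (g i * A) := div_pos hfb hga
    have h1 : 1 - ((f i * B) / (g i * A))⁻¹ ≤ Real.log ((f i * B) / (g i * A)) :=
      Real.one_sub_inv_le_log_of_pos hx
    have h2 : Real.log ((f i * B) / (g i * A)) =
        Real.log (f i / g i) - Real.log (A / B) := by
      rw [Real.log_div (ne_of_gt hfb) (ne_of_gt hga),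
        Real.log_div (ne_of_gt (hf i)) (ne_of_gt (hg i)),
        Real.log_div (ne_of_gt hApos) (ne_of_gt hBpos),
        Real.log_mul (ne_of_gt (hf i)) (ne_of_gt hBpos),
        Real.log_mul (ne_of_gt (hg i)) (ne_of_gt hApos)]
      ring
    have hinv : ((f i * B) / (g i * A))⁻¹ = (g i * A) / (f i * B) := inv_div _ _
    rw [h2, hinv] at h1
    have h3 : f i * (1 - (g i * A) / (f i * B)) ≤
        f i * (Real.log (f i / g i) - Real.log (A / B)) :=
      mul_le_mul_of_nonneg_left h1 (le_of_lt (hf i))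
    have h4 : f i * ((g i * A) / (f i * B)) = g i * (A / B) := by
      field_simp
      rw [mul_comm (f i)]; exact mul_div_cancel_right₀ _ (hf i).ne'
    rw [mul_sub, mul_sub, mul_one, h4] at h3
    linarith
  calc A * Real.log (A / B) = ∑ i, f i * Real.log (A / B) := by rw [← Finset.sum_mul]
    _ ≤ ∑ i, (f i * Real.log (f i / g i) - f i + g i * (A / B)) :=
        Finset.sum_le_sum fun i _ => key i
    _ = (∑ i, f i * Real.log (f i / g i)) - A + (A / B) * B := by
        rw [Finset.sum_add_distrib, Finset.sum_sub_distrib, ← Finset.sum_mul]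
        ring
    _ = ∑ i, f i * Real.log (f i / g i) := by
        rw [div_mul_cancel₀ _ (ne_of_gt hBpos)]; ring

/-- Relative smoothness of the Shmyrev objective:
`φ(b) ≤ ℓ(b; b') + D_h(b, b')` where `D_h(b,b') = Σ_{i,j} b_{ij} log(b_{ij}/b'_{ij})`. -/
theorem stmt_4 (N M : ℕ) (v b b' : Fin N → Fin M → ℝ)
    (hv : ∀ i j, 0 < v i j) (hb : ∀ i j, 0 < b i j) (hb' : ∀ i j, 0 < b' i j)
    (hrow : ∀ i, ∑ j, b i j = ∑ j, b' i j) :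
    shmyrev N M v b ≤
      (shmyrev N M v b' +
        ∑ i, ∑ j, (1 - Real.log (v i j / (∑ i', b' i' j))) * (b i j - b' i j)) +
      ∑ i, ∑ j, b i j * Real.log (b i j / b' i j) := by
  rcases Nat.eq_zero_or_pos N with hN | hN
  · subst hN
    simp [shmyrev]
  have hP : ∀ j, 0 < ∑ i, b i j :=
    fun j => Finset.sum_pos (fun i _ => hb i j) ⟨⟨0, hN⟩, Finset.mem_univ _⟩
  have hP' : ∀ j, 0 < ∑ i, b' i j :=
    fun j => Finset.sum_pos (fun i _ => hb' i j) ⟨⟨0, hN⟩, Finset.mem_univ _⟩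
  -- the sum of all entries is preserved
  have hsum0 : ∑ i, ∑ j, (b i j - b' i j) = 0 := by
    simp [Finset.sum_sub_distrib, hrow]
  -- expand the linear term
  have e1 : ∑ i, ∑ j, (1 - Real.log (v i j / (∑ i', b' i' j))) * (b i j - b' i j)
      = (∑ i, ∑ j, (b i j - b' i j))
        - ((∑ i, ∑ j, b i j * Real.log (v i j)) - ∑ i, ∑ j, b' i j * Real.log (v i j))
        + ((∑ j, (∑ i, b i j) * Real.log (∑ i, b' i j))
          - ∑ j, (∑ i, b' i j) * Real.log (∑ i, b' i j)) := by
    have h : ∀ i j, (1 - Real.log (v i j / (∑ i', b' i' j))) * (b i j - b' i j)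
        = (b i j - b' i j)
          - (b i j * Real.log (v i j) - b' i j * Real.log (v i j))
          + (b i j * Real.log (∑ i', b' i' j) - b' i j * Real.log (∑ i', b' i' j)) := by
      intro i j
      rw [Real.log_div (ne_of_gt (hv i j)) (ne_of_gt (hP' j))]
      ring
    simp_rw [h, Finset.sum_add_distrib, Finset.sum_sub_distrib]
    congr 1
    rw [Finset.sum_comm (f := fun i j => b i j * Real.log (∑ i', b' i' j)),
      Finset.sum_comm (f := fun i j => b' i j * Real.log (∑ i', b' i' j))]
    simp_rw [← Finset.sum_mul]
  -- the Bregman divergence of the aggregates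
  have e3 : ∑ j, (∑ i, b i j) * Real.log ((∑ i, b i j) / (∑ i, b' i j))
      = (∑ j, (∑ i, b i j) * Real.log (∑ i, b i j))
        - ∑ j, (∑ i, b i j) * Real.log (∑ i, b' i j) := by
    have h : ∀ j, (∑ i, b i j) * Real.log ((∑ i, b i j) / (∑ i, b' i j))
        = (∑ i, b i j) * Real.log (∑ i, b i j) - (∑ i, b i j) * Real.log (∑ i, b' i j) := by
      intro j
      rw [Real.log_div (ne_of_gt (hP j)) (ne_of_gt (hP' j))]
      ring
    simp_rw [h, Finset.sum_sub_distrib]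
  -- key identity: φ(b) = ℓ(b;b') + D_h(p,p')
  have hid : shmyrev N M v b = (shmyrev N M v b' +
      ∑ i, ∑ j, (1 - Real.log (v i j / (∑ i', b' i' j))) * (b i j - b' i j)) +
      ∑ j, (∑ i, b i j) * Real.log ((∑ i, b i j) / (∑ i, b' i j)) := by
    rw [e1, e3, hsum0]
    unfold shmyrev
    ring
  -- log-sum inequality per column
  have hls : ∑ j, (∑ i, b i j) * Real.log ((∑ i, b i j) / (∑ i, b' i j))
      ≤ ∑ i, ∑ j, b i j * Real.log (b i j / b' i j) := by
    rw [Finset.sum_comm]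
    exact Finset.sum_le_sum fun j _ =>
      log_sum_ineq N hN (fun i => b i j) (fun i => b' i j) (fun i => hb i j) (fun i => hb' i j)
  linarith [hid, hls]
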